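/- Let k ≥ 2, η ≠ 0, ε = ±1, let F be a smooth function of (z₀,…,z_k), let f₁₁ be a smooth function of z₀, f₁₂ and f₃₂ smooth functions of (z₀,…,z_{k−1}), f₂₂ a smooth function of (z₀,…,z_{k−2}), with Δ₁₂ := f₁₁f₂₂ − ηf₁₂ nowhere vanishing. Let a be a smooth function of (x,t,z₀,…,z_l) with l ≥ k, and set b = ε − (f₁₁/η)a and c = (f₁₁/η)²a − 2ε f₁₁/η. If the identity −a f₁₁' F + (Δ₁₂/η)(a_x + Σ_{i=0}^l a_{z_i} z_{i+1}) + (a f₂₂/η) f₁₁' z₁ − 2bΔ₁₃ + (a−c)Δ₂₃ = 0 holds identically in the jet variables (where f₁₁' = ∂f₁₁/∂z₀, Δ₁₃ = f₁₁f₃₂ − f₃₁f₁₂, Δ₂₃ = ηf₃₂ − f₃₁f₂₂, with f₃₁ a smooth function of z₀), then ∂a/∂z_l = 0, and consequently ∂b/∂z_l = ∂c/∂z_l = 0. -/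

import Mathlib

open scoped BigOperators

/-- A jet function: a function of `x`, `t` and the jet variables `z 0, z 1, …`,
where `z i` represents the derivative `∂^i u / ∂x^i`. -/
abbrev JetFun : Type := ℝ → ℝ → (ℕ → ℝ) → ℝ

/-- Partial derivative of a jet function with respect to `x`. -/
noncomputable def pX (f : JetFun) : JetFun := fun x t z => deriv (fun s => f s t z) x

/-- Partial derivative of a jet function with respect to `t`. -/
noncomputable def pT (f : JetFun) : JetFun := fun x t z => deriv (fun s => f x s z) t

/-- Partial derivative of a jet function with respect to the jet variable `z i`. -/
noncomputable def pZ (i : ℕ) (f : JetFun) : JetFun :=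
  fun x t z => deriv (fun s => f x t (Function.update z i s)) (z i)

/-- The total `x`-derivative `D_x = ∂_x + ∑_{i ≥ 0} z_{i+1} ∂_{z_i}`. -/
noncomputable def DX (f : JetFun) : JetFun :=
  fun x t z => pX f x t z + ∑' i : ℕ, z (i + 1) * pZ i f x t z

/-- The total `t`-derivative `D_t = ∂_t + ∑_{i ≥ 0} (D_x^i F) ∂_{z_i}` associated with the
evolution equation `u_t = F`. -/
noncomputable def DT (F : JetFun) (f : JetFun) : JetFun :=
  fun x t z => pT f x t z + ∑' i : ℕ, (DX^[i] F) x t z * pZ i f x t z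

/-- `f` is a smooth function of `(x, t, z 0, …, z m)` only. -/
def SmoothJet (m : ℕ) (f : JetFun) : Prop :=
  ∃ g : ℝ × ℝ × (Fin (m + 1) → ℝ) → ℝ, ContDiff ℝ (⊤ : ℕ∞) g ∧
    ∀ x t z, f x t z = g (x, t, fun i : Fin (m + 1) => z i.1)

/-- `f` is a smooth function of the jet variables `(z 0, …, z m)` only. -/
def SmoothZ (m : ℕ) (f : JetFun) : Prop :=
  ∃ g : (Fin (m + 1) → ℝ) → ℝ, ContDiff ℝ (⊤ : ℕ∞) g ∧
    ∀ x t z, f x t z = g (fun i : Fin (m + 1) => z i.1)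


lemma smoothJet_of_smoothZ {m : ℕ} {f : JetFun} (h : SmoothZ m f) : SmoothJet m f := by
  obtain ⟨g, hg, hgeq⟩ := h
  exact ⟨fun p => g p.2.2, hg.comp (contDiff_snd.comp contDiff_snd), fun x t z => hgeq x t z⟩

lemma updEval {m : ℕ} {f : JetFun} (h : SmoothJet m f) {j : ℕ} (hj : m < j) :
    ∀ (x t : ℝ) (z : ℕ → ℝ) (s : ℝ), f x t (Function.update z j s) = f x t z := by
  intro x t z s
  obtain ⟨g, hg, hgeq⟩ := h
  rw [hgeq, hgeq]
  have : (fun i : Fin (m + 1) => Function.update z j s i.1) = fun i : Fin (m + 1) => z i.1 := by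
    funext i
    have := i.isLt
    exact Function.update_of_ne (by omega) _ _
  rw [this]

lemma updpZ {m : ℕ} {f : JetFun} (h : SmoothJet m f) {i j : ℕ} (hi : i ≤ m) (hj : m < j) :
    ∀ (x t : ℝ) (z : ℕ → ℝ) (s : ℝ),
      pZ i f x t (Function.update z j s) = pZ i f x t z := by
  intro x t z s
  unfold pZ
  have hij : i ≠ j := by omega
  rw [Function.update_of_ne hij]
  congr 1
  funext r
  rw [Function.update_comm (Ne.symm hij)]
  exact updEval h hj x t _ s

lemma updpX {m : ℕ} {f : JetFun} (h : SmoothJet m f) {j : ℕ} (hj : m < j) :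
    ∀ (x t : ℝ) (z : ℕ → ℝ) (s : ℝ),
      pX f x t (Function.update z j s) = pX f x t z := by
  intro x t z s
  unfold pX
  congr 1
  funext x'
  exact updEval h hj x' t z s

/-- case `l ≥ k`: differentiating the rewritten first Codazzi identity with
respect to `z_{l+1}` yields `a_{z_l} = 0`, and consequently `b_{z_l} = c_{z_l} = 0`. -/
theorem case_l_ge_k_top_derivative_vanishes
    (k l : ℕ) (hk : 2 ≤ k) (hlk : k ≤ l) (η ε : ℝ) (hη : η ≠ 0) (hε : ε = 1 ∨ ε = -1)
    (F f11 f31 f12 f22 f32 a b c : JetFun)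
    (hF : SmoothZ k F)
    (hf11 : SmoothZ 0 f11) (hf31 : SmoothZ 0 f31)
    (hf12 : SmoothZ (k - 1) f12) (hf32 : SmoothZ (k - 1) f32)
    (hf22 : SmoothZ (k - 2) f22)
    (hΔ12 : ∀ x t z, f11 x t z * f22 x t z - η * f12 x t z ≠ 0)
    (ha : SmoothJet l a)
    (hbdef : ∀ x t z, b x t z = ε - f11 x t z / η * a x t z)
    (hcdef : ∀ x t z, c x t z = (f11 x t z / η) ^ 2 * a x t z - 2 * ε * (f11 x t z / η))
    (hid : ∀ x t z,
      -(a x t z) * pZ 0 f11 x t z * F x t z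
        + (f11 x t z * f22 x t z - η * f12 x t z) / η
            * (pX a x t z + ∑ i ∈ Finset.range (l + 1), pZ i a x t z * z (i + 1))
        + a x t z * f22 x t z / η * pZ 0 f11 x t z * z 1
        - 2 * b x t z * (f11 x t z * f32 x t z - f31 x t z * f12 x t z)
        + (a x t z - c x t z) * (η * f32 x t z - f31 x t z * f22 x t z) = 0) :
    ∀ x t z, pZ l a x t z = 0 ∧ pZ l b x t z = 0 ∧ pZ l c x t z = 0 := by
  intro x t z
  have hl2 : 2 ≤ l := le_trans hk hlk
  have haJ := ha
  have hFJ := smoothJet_of_smoothZ hF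
  have hf11J := smoothJet_of_smoothZ hf11
  have hf31J := smoothJet_of_smoothZ hf31
  have hf12J := smoothJet_of_smoothZ hf12
  have hf32J := smoothJet_of_smoothZ hf32
  have hf22J := smoothJet_of_smoothZ hf22
  set z1 : ℕ → ℝ := Function.update z (l + 1) (z (l + 1) + 1) with hz1
  -- evaluation lemmas at z1
  have e_a : a x t z1 = a x t z := updEval haJ (by omega) x t z _
  have e_F : F x t z1 = F x t z := updEval hFJ (by omega) x t z _
  have e_f11 : f11 x t z1 = f11 x t z := updEval hf11J (by omega) x t z _
  have e_f31 : f31 x t z1 = f31 x t z := updEval hf31J (by omega) x t z _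
  have e_f12 : f12 x t z1 = f12 x t z := updEval hf12J (by omega) x t z _
  have e_f32 : f32 x t z1 = f32 x t z := updEval hf32J (by omega) x t z _
  have e_f22 : f22 x t z1 = f22 x t z := updEval hf22J (by omega) x t z _
  have e_p11 : pZ 0 f11 x t z1 = pZ 0 f11 x t z := updpZ hf11J le_rfl (by omega) x t z _
  have e_pX : pX a x t z1 = pX a x t z := updpX haJ (by omega) x t z _
  have e_b : b x t z1 = b x t z := by rw [hbdef, hbdef, e_f11, e_a]
  have e_c : c x t z1 = c x t z := by rw [hcdef, hcdef, e_f11, e_a]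
  have e_z1one : z1 1 = z 1 := Function.update_of_ne (by omega) _ _
  have e_sum : ∑ i ∈ Finset.range (l + 1), pZ i a x t z1 * z1 (i + 1)
      = (∑ i ∈ Finset.range (l + 1), pZ i a x t z * z (i + 1)) + pZ l a x t z := by
    rw [Finset.sum_range_succ, Finset.sum_range_succ]
    have h1 : ∀ i ∈ Finset.range l,
        pZ i a x t z1 * z1 (i + 1) = pZ i a x t z * z (i + 1) := by
      intro i hi
      simp only [Finset.mem_range] at hi
      rw [updpZ haJ (by omega) (by omega),
        show z1 (i + 1) = z (i + 1) from Function.update_of_ne (by omega) _ _]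
    rw [Finset.sum_congr rfl h1, updpZ haJ le_rfl (by omega),
      show z1 (l + 1) = z (l + 1) + 1 from Function.update_self _ _ _]
    ring
  have H0 := hid x t z
  have H1 := hid x t z1
  rw [e_a, e_F, e_f11, e_f31, e_f12, e_f32, e_f22, e_p11, e_pX, e_b, e_c, e_z1one,
    e_sum] at H1
  have hD : (f11 x t z * f22 x t z - η * f12 x t z) / η ≠ 0 :=
    div_ne_zero (hΔ12 x t z) hη
  have hDp : (f11 x t z * f22 x t z - η * f12 x t z) / η * pZ l a x t z = 0 := by
    linear_combination H1 - H0
  have hpa : pZ l a x t z = 0 := (mul_eq_zero.mp hDp).resolve_left hD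
  refine ⟨hpa, ?_, ?_⟩
  · have hpa' : deriv (fun s => a x t (Function.update z l s)) (z l) = 0 := hpa
    have hb1 : (fun s => b x t (Function.update z l s))
        = fun s => ε - f11 x t z / η * a x t (Function.update z l s) := by
      funext s
      rw [hbdef, updEval hf11J (show 0 < l by omega)]
    show deriv (fun s => b x t (Function.update z l s)) (z l) = 0
    rw [hb1, deriv_const_sub, deriv_const_mul_field, hpa']
    ring
  · have hpa' : deriv (fun s => a x t (Function.update z l s)) (z l) = 0 := hpa
    have hc1 : (fun s => c x t (Function.update z l s))
        = fun s => (f11 x t z / η) ^ 2 * a x t (Function.update z l s)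
            - 2 * ε * (f11 x t z / η) := by
      funext s
      rw [hcdef, updEval hf11J (show 0 < l by omega)]
    show deriv (fun s => c x t (Function.update z l s)) (z l) = 0
    rw [hc1, deriv_sub_const, deriv_const_mul_field, hpa']
    ring
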